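/- The set {u ∈ M₂(ℍ) : uᴴ = −u and u·v = v·u}, i.e. the centralizer of v inside the real Lie algebra sp(2) of anti-self-adjoint 2×2 quaternionic matrices, is a real subspace of M₂(ℍ) of dimension 4. -/

import Mathlib

open Matrix
open scoped Quaternion

noncomputable def qi : Quaternion ℝ := ⟨0, 1, 0, 0⟩

noncomputable def vmat : Matrix (Fin 2) (Fin 2) (Quaternion ℝ) :=
  Matrix.diagonal (fun _ => qi)

private noncomputable def qmk (a b c d : ℝ) : Quaternion ℝ := ⟨a, b, c, d⟩
private lemma qh_mk (a b c d : ℝ) : (⟨a, b, c, d⟩ : Quaternion ℝ) = qmk a b c d := rfl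
private lemma qh_re (a b c d : ℝ) : (qmk a b c d).re = a := rfl
private lemma qh_imI (a b c d : ℝ) : (qmk a b c d).imI = b := rfl
private lemma qh_imJ (a b c d : ℝ) : (qmk a b c d).imJ = c := rfl
private lemma qh_imK (a b c d : ℝ) : (qmk a b c d).imK = d := rfl

private noncomputable def E : Fin 4 → Matrix (Fin 2) (Fin 2) (Quaternion ℝ)
  | 0 => !![⟨0,1,0,0⟩, 0; 0, 0]
  | 1 => !![0, 0; 0, ⟨0,1,0,0⟩]
  | 2 => !![0, 1; -1, 0]
  | 3 => !![0, ⟨0,1,0,0⟩; ⟨0,1,0,0⟩, 0]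

private noncomputable def Lmap : (Fin 4 → ℝ) →ₗ[ℝ] Matrix (Fin 2) (Fin 2) (Quaternion ℝ) where
  toFun c := c 0 • E 0 + c 1 • E 1 + c 2 • E 2 + c 3 • E 3
  map_add' x y := by simp [add_smul]; abel
  map_smul' r x := by simp [smul_add, smul_smul]

private lemma Lmap_apply (c : Fin 4 → ℝ) :
    Lmap c = !![⟨0, c 0, 0, 0⟩, ⟨c 2, c 3, 0, 0⟩;
                ⟨-(c 2), c 3, 0, 0⟩, ⟨0, c 1, 0, 0⟩] := by
  show c 0 • E 0 + c 1 • E 1 + c 2 • E 2 + c 3 • E 3 = _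
  refine Matrix.ext fun i j => ?_
  fin_cases i <;> fin_cases j <;>
    (apply QuaternionAlgebra.ext <;> simp [E, qh_mk, qh_re, qh_imI, qh_imJ, qh_imK])

private lemma comm_qi (q : Quaternion ℝ) (h : q * qi = qi * q) :
    q.imJ = 0 ∧ q.imK = 0 := by
  obtain ⟨a,b,c,d⟩ := q
  rw [Quaternion.ext_iff] at h
  simp [qi, qh_mk, qh_re, qh_imI, qh_imJ, qh_imK] at h
  exact ⟨by linarith [h.2], by linarith [h.1]⟩

theorem centralizer_v_in_sp2_is_fourDimensional :
    ∃ S : Submodule ℝ (Matrix (Fin 2) (Fin 2) (Quaternion ℝ)),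
      (S : Set (Matrix (Fin 2) (Fin 2) (Quaternion ℝ)))
          = {u | uᴴ = -u ∧ u * vmat = vmat * u} ∧
      Module.finrank ℝ S = 4 := by
  refine ⟨LinearMap.range Lmap, ?_, ?_⟩
  · ext u
    simp only [SetLike.mem_coe, LinearMap.mem_range, Set.mem_setOf_eq]
    constructor
    · rintro ⟨c, rfl⟩
      rw [Lmap_apply]
      constructor
      · refine Matrix.ext fun i j => ?_
        fin_cases i <;> fin_cases j <;>
          (apply QuaternionAlgebra.ext <;>
            simp [conjTranspose_apply, QuaternionAlgebra.star_mk, qh_mk, qh_re, qh_imI, qh_imJ, qh_imK])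
      · refine Matrix.ext fun i j => ?_
        rw [show vmat = Matrix.diagonal (fun _ => qi) from rfl, mul_diagonal, diagonal_mul]
        fin_cases i <;> fin_cases j <;>
          (apply QuaternionAlgebra.ext <;> simp [qi, qh_mk, qh_re, qh_imI, qh_imJ, qh_imK])
    · rintro ⟨h1, h2⟩
      have hc : ∀ i j, u i j * qi = qi * u i j := fun i j => by
        have := congrFun (congrFun h2 i) j
        simpa [vmat, mul_diagonal, diagonal_mul] using this
      have hJ : ∀ i j, (u i j).imJ = 0 := fun i j => (comm_qi _ (hc i j)).1
      have hK : ∀ i j, (u i j).imK = 0 := fun i j => (comm_qi _ (hc i j)).2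
      have hstar : ∀ i j, star (u j i) = -(u i j) := fun i j => by
        have := congrFun (congrFun h1 i) j
        simpa [conjTranspose_apply] using this
      have h00 : (u 0 0).re = 0 := by
        have := congr_arg QuaternionAlgebra.re (hstar 0 0)
        simp at this; linarith
      have h11 : (u 1 1).re = 0 := by
        have := congr_arg QuaternionAlgebra.re (hstar 1 1)
        simp at this; linarith
      have h10re : (u 1 0).re = -(u 0 1).re := by
        have := congr_arg QuaternionAlgebra.re (hstar 1 0)
        simp at this; linarith
      have h10imI : (u 1 0).imI = (u 0 1).imI := by
        have := congr_arg QuaternionAlgebra.imI (hstar 1 0)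
        simp at this; linarith
      refine ⟨![(u 0 0).imI, (u 1 1).imI, (u 0 1).re, (u 0 1).imI], ?_⟩
      rw [Lmap_apply]
      refine Matrix.ext fun i j => ?_
      fin_cases i <;> fin_cases j <;>
        (apply QuaternionAlgebra.ext <;>
          simp [h00, h11, h10re, h10imI, hJ, hK])
  · have hinj : Function.Injective Lmap := by
      rw [← LinearMap.ker_eq_bot, LinearMap.ker_eq_bot']
      intro c h
      rw [Lmap_apply] at h
      funext x
      fin_cases x
      · simpa using congr_arg (fun m => (m 0 0).imI) h
      · simpa using congr_arg (fun m => (m 1 1).imI) h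
      · simpa using congr_arg (fun m => (m 0 1).re) h
      · simpa using congr_arg (fun m => (m 0 1).imI) h
    rw [LinearMap.finrank_range_of_inj hinj]
    simp
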